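/- Let σ : ℝ → ℝ be continuously differentiable, W ∈ ℝⁿ, s ∈ ℝ, and define g : ℝⁿ → ℝ by g(u) = σ(∑_{j} W_j u_j + s). Let x, x̃ ∈ ℝⁿ with Δ := ∑_{j} W_j (x_j − x̃_j) ≠ 0. Then for every i, the Integrated Gradients attribution for g from baseline x̃ equals the DeepLIFT Rescale attribution: (x_i − x̃_i) · ∫_0^1 (∂g/∂u_i)(x̃ + α(x − x̃)) dα = (W_i (x_i − x̃_i) / Δ) · (g(x) − g(x̃)). -/

import Mathlib

open Finset

/-- For a continuously differentiable activation `σ` and the module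
`g(u) = σ(∑ⱼ Wⱼuⱼ + s)`, with `Δ = ∑ⱼ Wⱼ(xⱼ − x̃ⱼ) ≠ 0`, the Integrated Gradients
attribution of variable `i` from baseline `x̃` equals the DeepLIFT Rescale attribution
`(Wᵢ(xᵢ − x̃ᵢ)/Δ)·(g(x) − g(x̃))`. -/
theorem integrated_gradients_eq_deeplift_rescale {n : ℕ} (hn : 1 ≤ n)
    (σ : ℝ → ℝ) (hσ : ContDiff ℝ 1 σ) (W : Fin n → ℝ) (s : ℝ) (x xt : Fin n → ℝ)
    (hΔ : ∑ j, W j * (x j - xt j) ≠ 0) (i : Fin n) :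
    (x i - xt i) *
        ∫ α in (0:ℝ)..1,
          fderiv ℝ (fun u : Fin n → ℝ => σ (∑ j, W j * u j + s))
            (fun j => xt j + α * (x j - xt j)) (Pi.single i 1)
      = (W i * (x i - xt i) / ∑ j, W j * (x j - xt j)) *
          (σ (∑ j, W j * x j + s) - σ (∑ j, W j * xt j + s)) := by
  set Δ := ∑ j, W j * (x j - xt j) with hΔdef
  set A := ∑ j, W j * xt j + s with hA
  have hσd : Differentiable ℝ σ := hσ.differentiable one_ne_zero
  set L : (Fin n → ℝ) →L[ℝ] ℝ := ∑ j, W j • (ContinuousLinearMap.proj j) with hL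
  have hLapp : ∀ v : Fin n → ℝ, L v = ∑ j, W j * v j := by
    intro v
    simp [hL, ContinuousLinearMap.sum_apply]
  have hlin : ∀ u : Fin n → ℝ, HasFDerivAt (fun u : Fin n → ℝ => ∑ j, W j * u j + s) L u := by
    intro u
    have h1 : HasFDerivAt (fun u : Fin n → ℝ => ∑ j, W j * u j) L u := by
      have := HasFDerivAt.fun_sum (fun j (_ : j ∈ Finset.univ) =>
        ((ContinuousLinearMap.proj (R := ℝ) (φ := fun _ : Fin n => ℝ) j).hasFDerivAt (x := u)).const_mul (W j))
      simpa [hL] using this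
    exact h1.add_const s
  have hgd : ∀ u : Fin n → ℝ, HasFDerivAt (fun u : Fin n → ℝ => σ (∑ j, W j * u j + s))
      ((deriv σ (∑ j, W j * u j + s)) • L) u := by
    intro u
    exact (hσd (∑ j, W j * u j + s)).hasDerivAt.comp_hasFDerivAt u (hlin u)
  have hLsingle : L (Pi.single i 1) = W i := by
    rw [hLapp]
    simp [Pi.single_apply, mul_ite]
  have hsum : ∀ α : ℝ, ∑ j, W j * (xt j + α * (x j - xt j)) + s = A + α * Δ := by
    intro α
    have h : ∀ j : Fin n, W j * (xt j + α * (x j - xt j))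
        = W j * xt j + α * (W j * (x j - xt j)) := fun j => by ring
    rw [Finset.sum_congr rfl (fun j _ => h j), Finset.sum_add_distrib, ← Finset.mul_sum,
      ← hΔdef, hA]
    ring
  have hAD : ∑ j, W j * x j + s = A + Δ := by
    rw [hA, hΔdef, add_right_comm, add_left_inj, ← Finset.sum_add_distrib]
    exact Finset.sum_congr rfl (fun j _ => by ring)
  have hcont : Continuous fun α : ℝ => deriv σ (A + α * Δ) :=
    (hσ.continuous_deriv le_rfl).comp (by continuity)
  have hF : ∀ α : ℝ, HasDerivAt (fun α : ℝ => σ (A + α * Δ)) (deriv σ (A + α * Δ) * Δ) α := by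
    intro α
    exact ((hσd (A + α * Δ)).hasDerivAt).comp α ((hasDerivAt_mul_const Δ).const_add A)
  have hint : ∫ α in (0:ℝ)..1, deriv σ (A + α * Δ) * Δ = σ (A + Δ) - σ A := by
    have := intervalIntegral.integral_eq_sub_of_hasDerivAt (a := 0) (b := 1)
      (f := fun α : ℝ => σ (A + α * Δ)) (f' := fun α => deriv σ (A + α * Δ) * Δ)
      (fun α _ => hF α) ((hcont.mul continuous_const).intervalIntegrable 0 1)
    simpa using this
  have hint2 : ∫ α in (0:ℝ)..1, deriv σ (A + α * Δ) = (σ (A + Δ) - σ A) / Δ := by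
    rw [eq_div_iff hΔ, ← hint, ← intervalIntegral.integral_mul_const]
  have hintegrand : ∀ α : ℝ,
      fderiv ℝ (fun u : Fin n → ℝ => σ (∑ j, W j * u j + s))
        (fun j => xt j + α * (x j - xt j)) (Pi.single i 1)
      = deriv σ (A + α * Δ) * W i := by
    intro α
    rw [(hgd _).fderiv]
    simp only [ContinuousLinearMap.smul_apply, hLsingle, smul_eq_mul, hsum α]
  calc (x i - xt i) *
        ∫ α in (0:ℝ)..1,
          fderiv ℝ (fun u : Fin n → ℝ => σ (∑ j, W j * u j + s))
            (fun j => xt j + α * (x j - xt j)) (Pi.single i 1)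
      = (x i - xt i) * ∫ α in (0:ℝ)..1, deriv σ (A + α * Δ) * W i := by
        rw [intervalIntegral.integral_congr (fun α _ => hintegrand α)]
    _ = (x i - xt i) * (((σ (A + Δ) - σ A) / Δ) * W i) := by
        rw [intervalIntegral.integral_mul_const, hint2]
    _ = (W i * (x i - xt i) / Δ) * (σ (∑ j, W j * x j + s) - σ (∑ j, W j * xt j + s)) := by
        rw [hAD, hA]
        ring
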